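/- Let Σ=(X,U,φ) be a forward complete system with inputs and let ‖·‖_U be an admissible functional on U. Then Σ is ISS with respect to ‖·‖_U if and only if Σ has the following three properties: (C1) uniformly bounded reachability sets (UBRS); (C2) uniform continuity at the equilibrium point (UCEP); (C3) uniform (with respect to initial time and initial state) asymptotic gain (UUAG). -/

import Mathlib

open Set Filter

/-- A (forward complete) time-varying system with inputs `Σ = (X, U, φ)`:
`U` is a set of admissible inputs containing the zero input and closed under
concatenation, and `φ` is a transition map satisfying the identity, causality
and semigroup axioms. -/
structure Sys (X Uv : Type*) [NormedAddCommGroup X] [NormedSpace ℝ X]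
    [AddCommGroup Uv] [Module ℝ Uv] where
  U : Set (ℝ → Uv)
  zero_mem : (fun _ => (0 : Uv)) ∈ U
  concat_mem : ∀ u ∈ U, ∀ v ∈ U, ∀ t : ℝ, 0 < t →
      (fun r => if r ≤ t then u r else v r) ∈ U
  phi : ℝ → ℝ → X → (ℝ → Uv) → X
  identity : ∀ t : ℝ, 0 ≤ t → ∀ x u, u ∈ U → phi t t x u = x
  causality : ∀ s t : ℝ, ∀ x : X, ∀ u v, 0 ≤ s → s < t → u ∈ U → v ∈ U →
      (∀ r, s < r → r ≤ t → v r = u r) → phi t s x v = phi t s x u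
  semigroup : ∀ s τ t : ℝ, ∀ x : X, ∀ u, 0 ≤ s → s < τ → τ < t → u ∈ U →
      phi t τ (phi τ s x u) u = phi t s x u

variable {X Uv : Type*} [NormedAddCommGroup X] [NormedSpace ℝ X]
  [AddCommGroup Uv] [Module ℝ Uv]

/-- The truncation `u_(s,t]` of an input. -/
noncomputable def trunc (u : ℝ → Uv) (s t : ℝ) : ℝ → Uv := fun r => if s < r ∧ r ≤ t then u r else 0

/-- The truncation `u_(s,∞)` of an input. -/
noncomputable def truncFrom (u : ℝ → Uv) (s : ℝ) : ℝ → Uv := fun r => if s < r then u r else 0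

/-- An admissible functional `‖·‖_U : U → [0,∞]`. -/
structure IsAdmissible (S : Sys X Uv) (nrm : (ℝ → Uv) → ENNReal) : Prop where
  zero : nrm (fun _ => (0 : Uv)) = 0
  fin : ∀ u ∈ S.U, ∀ s t : ℝ, 0 ≤ s → s < t → nrm (trunc u s t) < ⊤
  le_tail : ∀ u ∈ S.U, ∀ s t : ℝ, 0 ≤ s → s < t → nrm (trunc u s t) ≤ nrm (truncFrom u s)
  tail_le : ∀ u ∈ S.U, ∀ s : ℝ, 0 ≤ s → nrm (truncFrom u s) ≤ nrm u

/-- A function of class `K`. -/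
def ClassK (α : ℝ → ℝ) : Prop :=
  ContinuousOn α (Ici 0) ∧ StrictMonoOn α (Ici 0) ∧ α 0 = 0

/-- A function of class `K∞`. -/
def ClassKInf (α : ℝ → ℝ) : Prop := ClassK α ∧ Tendsto α atTop atTop


/-- A function of class `KL`. -/
def ClassKL (β : ℝ → ℝ → ℝ) : Prop :=
  (∀ t ≥ (0:ℝ), ClassK (fun r => β r t)) ∧
  (∀ r ≥ (0:ℝ), AntitoneOn (fun t => β r t) (Ici 0) ∧
    Tendsto (fun t => β r t) atTop (nhds 0))

/-- Assumption 1: continuity of trajectories with respect to the input at the zero input,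
uniformly over the initial time. -/
def AssumptionA1 (S : Sys X Uv) (nrm : (ℝ → Uv) → ENNReal) : Prop :=
  ∀ r > (0:ℝ), ∀ ε > (0:ℝ), ∀ T > (0:ℝ), ∃ δ > (0:ℝ),
    ∀ t0 ≥ (0:ℝ), ∀ x0 : X, ∀ u ∈ S.U, nrm u ≤ ENNReal.ofReal δ →
      ∀ tstar ∈ Icc t0 (t0 + T),
        (∀ t ∈ Icc t0 tstar,
            ‖S.phi t t0 x0 u‖ ≤ r ∧ ‖S.phi t t0 x0 (fun _ => 0)‖ ≤ r) →
        ∀ t ∈ Icc t0 tstar,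
          ‖S.phi t t0 x0 (fun _ => 0) - S.phi t t0 x0 u‖ ≤ ε

/-- The system is 0-GUAS: globally uniformly asymptotically stable under zero input. -/
def ZeroGUAS (S : Sys X Uv) : Prop :=
  ∃ β, ClassKL β ∧ ∀ t0 ≥ (0:ℝ), ∀ x0 : X, ∀ t ≥ t0,
    ‖S.phi t t0 x0 (fun _ => 0)‖ ≤ β ‖x0‖ (t - t0)

/-- The system is ISS with respect to the admissible functional `nrm`.
Inputs with infinite `nrm` satisfy the estimate trivially thanks to the
convention `ρ(∞) = ∞`, so only inputs of finite `nrm` are quantified over. -/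
def ISS (S : Sys X Uv) (nrm : (ℝ → Uv) → ENNReal) : Prop :=
  ∃ β ρ, ClassKL β ∧ ClassKInf ρ ∧
    ∀ t0 ≥ (0:ℝ), ∀ x0 : X, ∀ u ∈ S.U, nrm u < ⊤ → ∀ t ≥ t0,
      ‖S.phi t t0 x0 u‖ ≤ β ‖x0‖ (t - t0) + ρ (nrm u).toReal

/-- The system is UGB (uniformly globally bounded) with respect to `nrm`. -/
def UGB (S : Sys X Uv) (nrm : (ℝ → Uv) → ENNReal) : Prop :=
  ∃ c α ρ, 0 ≤ c ∧ ClassKInf α ∧ ClassKInf ρ ∧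
    ∀ t0 ≥ (0:ℝ), ∀ x0 : X, ∀ u ∈ S.U, nrm u < ⊤ → ∀ t ≥ t0,
      ‖S.phi t t0 x0 u‖ ≤ c + α ‖x0‖ + ρ (nrm u).toReal

/-- The system is UGS (uniformly globally stable) with respect to `nrm`, i.e. UGB with `c = 0`. -/
def UGS (S : Sys X Uv) (nrm : (ℝ → Uv) → ENNReal) : Prop :=
  ∃ α ρ, ClassKInf α ∧ ClassKInf ρ ∧
    ∀ t0 ≥ (0:ℝ), ∀ x0 : X, ∀ u ∈ S.U, nrm u < ⊤ → ∀ t ≥ t0,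
      ‖S.phi t t0 x0 u‖ ≤ α ‖x0‖ + ρ (nrm u).toReal

/-- Condition (E) on the admissible functional. -/
def CondE (S : Sys X Uv) (nrm : (ℝ → Uv) → ENNReal) : Prop :=
  ∀ u ∈ S.U, ∀ t1 t2 t3 : ℝ, 0 ≤ t1 → t1 < t2 → t2 < t3 →
    nrm (trunc u t1 t2) + nrm (trunc u t2 t3) ≤ nrm (trunc u t1 t3)

/-- Uniformly bounded reachability sets. -/
def UBRS (S : Sys X Uv) (nrm : (ℝ → Uv) → ENNReal) : Prop :=
  ∀ T > (0:ℝ), ∀ r > (0:ℝ), ∀ s > (0:ℝ), ∃ C, 0 ≤ C ∧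
    ∀ t0 ≥ (0:ℝ), ∀ x0 : X, ‖x0‖ ≤ r → ∀ u ∈ S.U, nrm u ≤ ENNReal.ofReal s →
      ∀ t ∈ Icc t0 (t0 + T), ‖S.phi t t0 x0 u‖ ≤ C

/-- Uniform continuity at the equilibrium point. -/
def UCEP (S : Sys X Uv) (nrm : (ℝ → Uv) → ENNReal) : Prop :=
  ∀ h > (0:ℝ), ∀ ε > (0:ℝ), ∃ δ > (0:ℝ),
    ∀ t0 ≥ (0:ℝ), ∀ x0 : X, ‖x0‖ ≤ δ → ∀ u ∈ S.U, nrm u ≤ ENNReal.ofReal δ →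
      ∀ t ∈ Icc t0 (t0 + h), ‖S.phi t t0 x0 u‖ ≤ ε

/-- Uniform (w.r.t. initial time and initial state) asymptotic gain.
Inputs with infinite `nrm` satisfy the estimate trivially thanks to the convention
`ν(∞) = ∞`, so only inputs of finite `nrm` are quantified over. -/
def UUAG (S : Sys X Uv) (nrm : (ℝ → Uv) → ENNReal) : Prop :=
  ∃ ν, ClassK ν ∧ ∀ r ε : ℝ, 0 < ε → ε ≤ r → ∃ T > (0:ℝ),
    ∀ t0 ≥ (0:ℝ), ∀ x0 : X, ‖x0‖ ≤ r → ∀ u ∈ S.U, nrm u < ⊤ →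
      ∀ t ≥ t0 + T, ‖S.phi t t0 x0 u‖ ≤ ε + ν (nrm u).toReal

section AuxLemmas

open MeasureTheory

lemma ClassK.mono {α : ℝ → ℝ} (h : ClassK α) : MonotoneOn α (Ici 0) :=
  h.2.1.monotoneOn

lemma ClassK.nonneg {α : ℝ → ℝ} (h : ClassK α) {x : ℝ} (hx : 0 ≤ x) : 0 ≤ α x := by
  have := h.mono (Set.mem_Ici.mpr le_rfl) (Set.mem_Ici.mpr hx) hx
  simpa [h.2.2] using this

/-- near-zero smallness of a class-K function, ε-δ form -/
lemma ClassK.small {α : ℝ → ℝ} (h : ClassK α) : ∀ ε > (0:ℝ), ∃ δ > (0:ℝ),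
    ∀ x, 0 ≤ x → x ≤ δ → α x ≤ ε := by
  intro ε hε
  have hc : ContinuousWithinAt α (Ici 0) 0 := h.1 0 (Set.mem_Ici.mpr le_rfl)
  rw [ContinuousWithinAt, Metric.tendsto_nhdsWithin_nhds] at hc
  obtain ⟨δ, hδ, hd⟩ := hc ε hε
  refine ⟨δ/2, by linarith, fun x hx hxδ => ?_⟩
  have := hd (Set.mem_Ici.mpr hx) (by rw [Real.dist_eq, abs_of_nonneg (by linarith : (0:ℝ) ≤ x - 0)]; linarith)
  rw [Real.dist_eq, h.2.2, sub_zero] at this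
  calc α x ≤ |α x| := le_abs_self _
  _ ≤ ε := le_of_lt this

lemma monoMulInt {w : ℝ → ℝ} (hw : Monotone w) (c a b : ℝ) :
    IntervalIntegrable (fun y => w (c * y)) volume a b := by
  rcases le_or_gt 0 c with hc | hc
  · exact (MonotoneOn.intervalIntegrable (fun x _ y _ hxy =>
      hw (mul_le_mul_of_nonneg_left hxy hc)))
  · exact (AntitoneOn.intervalIntegrable (fun x _ y _ hxy =>
      hw (mul_le_mul_of_nonpos_left hxy (le_of_lt hc))))

/-- Construction of a class-K majorant of a monotone function vanishing at 0+. -/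
lemma exists_K_majorant (w : ℝ → ℝ) (hw : Monotone w) (h0 : w 0 = 0)
    (hsmall : ∀ ε > (0:ℝ), ∃ δ > (0:ℝ), ∀ c, c ≤ δ → w c ≤ ε) :
    ∃ σ : ℝ → ℝ, ContinuousOn σ (Ici 0) ∧ StrictMonoOn σ (Ici 0) ∧ σ 0 = 0 ∧
      MonotoneOn σ (Ici 0) ∧ (∀ c, 0 ≤ c → w c ≤ σ c) ∧ (∀ c, 0 ≤ c → 0 ≤ σ c) := by
  have hnn : ∀ c, 0 ≤ c → 0 ≤ w c := by
    intro c hc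
    rw [← h0]; exact hw hc
  set σ : ℝ → ℝ := fun c => c + ∫ y in (1:ℝ)..2, w (c * y) with hσdef
  have hInn : ∀ c : ℝ, 0 ≤ c → 0 ≤ ∫ y in (1:ℝ)..2, w (c * y) := by
    intro c hc
    apply intervalIntegral.integral_nonneg (by norm_num)
    intro y hy
    exact hnn _ (mul_nonneg hc (by linarith [hy.1]))
  have hImono : ∀ c₁ c₂ : ℝ, 0 ≤ c₁ → c₁ ≤ c₂ →
      (∫ y in (1:ℝ)..2, w (c₁ * y)) ≤ ∫ y in (1:ℝ)..2, w (c₂ * y) := by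
    intro c₁ c₂ _ h
    apply intervalIntegral.integral_mono_on (by norm_num) (monoMulInt hw _ _ _) (monoMulInt hw _ _ _)
    intro y hy
    exact hw (mul_le_mul_of_nonneg_right h (by linarith [hy.1]))
  have hmaj : ∀ c, 0 ≤ c → w c ≤ σ c := by
    intro c hc
    have h1 : (∫ y in (1:ℝ)..2, w c) ≤ ∫ y in (1:ℝ)..2, w (c * y) := by
      apply intervalIntegral.integral_mono_on (by norm_num)
        intervalIntegrable_const (monoMulInt hw _ _ _)
      intro y hy
      exact hw (le_mul_of_one_le_right hc hy.1)
    rw [intervalIntegral.integral_const] at h1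
    norm_num at h1
    have : σ c = c + ∫ y in (1:ℝ)..2, w (c * y) := rfl
    linarith
  have hImaj : ∀ c, 0 ≤ c → (∫ y in (1:ℝ)..2, w (c * y)) ≤ w (2 * c) := by
    intro c hc
    have h1 : (∫ y in (1:ℝ)..2, w (c * y)) ≤ ∫ y in (1:ℝ)..2, w (2 * c) := by
      apply intervalIntegral.integral_mono_on (by norm_num)
        (monoMulInt hw _ _ _) intervalIntegrable_const
      intro y hy
      exact hw (by nlinarith [hy.2])
    rw [intervalIntegral.integral_const] at h1
    norm_num at h1
    exact h1
  have hσ0 : σ 0 = 0 := by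
    have : σ 0 = 0 + ∫ y in (1:ℝ)..2, w (0 * y) := rfl
    simp only [zero_mul, h0] at this
    simpa using this
  have hσmono : MonotoneOn σ (Ici 0) := by
    intro a ha b hb hab
    have := hImono a b ha hab
    have ea : σ a = a + ∫ y in (1:ℝ)..2, w (a * y) := rfl
    have eb : σ b = b + ∫ y in (1:ℝ)..2, w (b * y) := rfl
    linarith
  have hσstrict : StrictMonoOn σ (Ici 0) := by
    intro a ha b hb hab
    have := hImono a b ha (le_of_lt hab)
    have ea : σ a = a + ∫ y in (1:ℝ)..2, w (a * y) := rfl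
    have eb : σ b = b + ∫ y in (1:ℝ)..2, w (b * y) := rfl
    linarith
  have hF : Continuous fun x => ∫ t in (0:ℝ)..x, w t :=
    intervalIntegral.continuous_primitive
      (fun a b => (hw.monotoneOn _).intervalIntegrable) 0
  set F : ℝ → ℝ := fun x => ∫ t in (0:ℝ)..x, w t with hFdef
  have hrepr : ∀ c : ℝ, c ≠ 0 → σ c = c + c⁻¹ * (F (c * 2) - F (c * 1)) := by
    intro c hcne
    have h1 : (∫ y in (1:ℝ)..2, w (c * y)) = c⁻¹ • ∫ x in (c*1)..(c*2), w x :=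
      intervalIntegral.integral_comp_mul_left w hcne
    have h2 : F (c*2) - F (c*1) = ∫ x in (c*1)..(c*2), w x :=
      intervalIntegral.integral_interval_sub_left
        ((hw.monotoneOn _).intervalIntegrable) ((hw.monotoneOn _).intervalIntegrable)
    rw [hσdef]
    dsimp only
    rw [h1, h2]
    simp [smul_eq_mul]
  have hcont : ContinuousOn σ (Ici 0) := by
    intro c hc
    rcases eq_or_lt_of_le (Set.mem_Ici.mp hc) with h0c | h0c
    · -- continuity at 0 within Ici 0
      rw [ContinuousWithinAt, ← h0c, hσ0, Metric.tendsto_nhdsWithin_nhds]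
      intro ε hε
      obtain ⟨δ₁, hδ₁, hsm⟩ := hsmall (ε/2) (by linarith)
      refine ⟨min (δ₁/2) (ε/4), by positivity, ?_⟩
      intro y hy hyd
      rw [Real.dist_eq, sub_zero] at hyd ⊢
      have hy0 : 0 ≤ y := Set.mem_Ici.mp hy
      rw [abs_of_nonneg hy0] at hyd
      have hyb : y < δ₁/2 := lt_of_lt_of_le hyd (min_le_left _ _)
      have hyε : y < ε/4 := lt_of_lt_of_le hyd (min_le_right _ _)
      have h1 : (∫ t in (1:ℝ)..2, w (y * t)) ≤ w (2 * y) := hImaj y hy0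
      have h2 : w (2 * y) ≤ ε/2 := hsm _ (by linarith)
      have h3 : 0 ≤ σ y := by
        have := hInn y hy0
        have e : σ y = y + ∫ t in (1:ℝ)..2, w (y * t) := rfl
        linarith
      rw [abs_of_nonneg h3]
      have : σ y = y + ∫ t in (1:ℝ)..2, w (y * t) := rfl
      linarith
    · -- continuity at c > 0
      apply ContinuousAt.continuousWithinAt
      have hev : (fun x : ℝ => x + x⁻¹ * (F (x * 2) - F (x * 1))) =ᶠ[nhds c] σ := by
        filter_upwards [IsOpen.mem_nhds isOpen_Ioi h0c] with x hx
        exact (hrepr x (ne_of_gt hx)).symm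
      apply ContinuousAt.congr _ hev
      apply ContinuousAt.add continuousAt_id
      apply ContinuousAt.mul (continuousAt_inv₀ (ne_of_gt h0c))
      exact ((hF.comp (continuous_mul_right 2)).sub (hF.comp (continuous_mul_right 1))).continuousAt
  have hσnn : ∀ c, 0 ≤ c → 0 ≤ σ c := by
    intro c hc
    have := hInn c hc
    have e : σ c = c + ∫ y in (1:ℝ)..2, w (c * y) := rfl
    linarith
  exact ⟨σ, hcont, hσstrict, hσ0, hσmono, hmaj, hσnn⟩

end AuxLemmas
section AuxB

open MeasureTheory

/-- Construction of a class-KL majorant. -/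
lemma exists_KL_majorant (ψ : ℝ → ℝ → ℝ) (κ : ℝ → ℝ)
    (hκc : ContinuousOn κ (Ici 0)) (hκm : MonotoneOn κ (Ici 0)) (hκ0 : κ 0 = 0)
    (hκnn : ∀ c, 0 ≤ c → 0 ≤ κ c)
    (hψnn : ∀ r τ, 0 ≤ ψ r τ)
    (hψκ : ∀ r, 0 ≤ r → ∀ τ, ψ r τ ≤ κ r)
    (hψm : ∀ τ, Monotone (fun r => ψ r τ))
    (hψa : ∀ r, Antitone (fun τ => ψ r τ))
    (hdecay : ∀ r, ∀ η > (0:ℝ), ∃ τ, ∀ t ≥ τ, ψ r t ≤ η) :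
    ∃ β, ClassKL β ∧ ∀ r, 0 ≤ r → ∀ t, 0 ≤ t → ψ r t ≤ β r t := by
  have hψ0 : ∀ τ, ψ 0 τ = 0 := fun τ =>
    le_antisymm (by simpa [hκ0] using hψκ 0 le_rfl τ) (hψnn 0 τ)
  have hψneg : ∀ r, r ≤ 0 → ∀ τ, ψ r τ = 0 := fun r hr τ =>
    le_antisymm (by simpa [hψ0] using hψm τ hr) (hψnn r τ)
  have hψκ' : ∀ r τ, ψ r τ ≤ κ (max r 0) := by
    intro r τ
    calc ψ r τ ≤ ψ (max r 0) τ := hψm τ (le_max_left _ _)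
    _ ≤ κ (max r 0) := hψκ _ (le_max_right _ _) _
  -- the time-averaged function
  set β₀ : ℝ → ℝ → ℝ := fun r t => ∫ s in (t-1)..t, ψ r (max s 0) with hβ₀def
  have hga : ∀ r, Antitone (fun s => ψ r (max s 0)) := by
    intro r s t hst
    exact hψa r (max_le_max hst le_rfl)
  have hgint : ∀ r a b, IntervalIntegrable (fun s => ψ r (max s 0)) volume a b :=
    fun r a b => ((hga r).antitoneOn _).intervalIntegrable
  have hβ₀nn : ∀ r t, 0 ≤ β₀ r t := by
    intro r t
    exact intervalIntegral.integral_nonneg (by linarith) (fun s _ => hψnn _ _)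
  have hβ₀lb : ∀ r t, 0 ≤ t → ψ r t ≤ β₀ r t := by
    intro r t ht
    have h1 : (∫ s in (t-1)..t, ψ r t) ≤ ∫ s in (t-1)..t, ψ r (max s 0) := by
      apply intervalIntegral.integral_mono_on (by linarith) intervalIntegrable_const (hgint r _ _)
      intro s hs
      have : max s 0 ≤ t := max_le hs.2 ht
      exact hψa r this
    rw [intervalIntegral.integral_const] at h1
    simpa using h1
  have hβ₀ub : ∀ r t, β₀ r t ≤ ψ r (max (t-1) 0) := by
    intro r t
    have h1 : (∫ s in (t-1)..t, ψ r (max s 0)) ≤ ∫ s in (t-1)..t, ψ r (max (t-1) 0) := by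
      apply intervalIntegral.integral_mono_on (by linarith) (hgint r _ _) intervalIntegrable_const
      intro s hs
      exact hga r (by simpa using hs.1 : (t-1) ≤ s)
    rw [intervalIntegral.integral_const] at h1
    simpa using h1
  have hβ₀κ : ∀ r t, 0 ≤ r → β₀ r t ≤ κ r := by
    intro r t hr
    calc β₀ r t ≤ ψ r (max (t-1) 0) := hβ₀ub r t
    _ ≤ κ r := hψκ r hr _
  have hβ₀mono : ∀ t, Monotone (fun r => β₀ r t) := by
    intro t a b hab
    apply intervalIntegral.integral_mono_on (by linarith) (hgint a _ _) (hgint b _ _)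
    intro s _
    exact hψm _ hab
  have hβ₀rw : ∀ r t : ℝ, β₀ r t = ∫ s in (0:ℝ)..1, ψ r (max (s + (t-1)) 0) := by
    intro r t
    have e : (∫ s in (0:ℝ)..1, ψ r (max (s + (t-1)) 0))
        = ∫ s in (0+(t-1))..(1+(t-1)), ψ r (max s 0) :=
      intervalIntegral.integral_comp_add_right (fun s => ψ r (max s 0)) (t-1)
    have e2 : (0:ℝ)+(t-1) = t-1 := by ring
    have e3 : (1:ℝ)+(t-1) = t := by ring
    rw [e2, e3] at e
    exact e.symm
  have hβ₀anti : ∀ r, Antitone (fun t => β₀ r t) := by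
    intro r t₁ t₂ h
    simp only
    rw [hβ₀rw r t₁, hβ₀rw r t₂]
    apply intervalIntegral.integral_mono_on (by norm_num)
      (((hga r).comp_monotone (fun a b hab => by simpa using hab : Monotone (fun s : ℝ => s + (t₂-1)))).antitoneOn _).intervalIntegrable
      (((hga r).comp_monotone (fun a b hab => by simpa using hab : Monotone (fun s : ℝ => s + (t₁-1)))).antitoneOn _).intervalIntegrable
    intro s _
    exact hga r (by linarith : s + (t₁ - 1) ≤ s + (t₂ - 1))
  -- the state-averaged function
  set β₁ : ℝ → ℝ → ℝ := fun r t => ∫ p in r..(r+1), β₀ p t with hβ₁def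
  have hβ₁int : ∀ t a b, IntervalIntegrable (fun p => β₀ p t) volume a b :=
    fun t a b => ((hβ₀mono t).monotoneOn _).intervalIntegrable
  have hβ₁nn : ∀ r t, 0 ≤ β₁ r t := by
    intro r t
    exact intervalIntegral.integral_nonneg (by linarith) (fun p _ => hβ₀nn _ _)
  have hβ₁lb : ∀ r t, β₀ r t ≤ β₁ r t := by
    intro r t
    have h1 : (∫ p in r..(r+1), β₀ r t) ≤ ∫ p in r..(r+1), β₀ p t := by
      apply intervalIntegral.integral_mono_on (by linarith) intervalIntegrable_const (hβ₁int t _ _)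
      intro p hp
      exact hβ₀mono t hp.1
    rw [intervalIntegral.integral_const] at h1
    simpa using h1
  have hβ₁ub : ∀ r t, β₁ r t ≤ β₀ (r+1) t := by
    intro r t
    have h1 : (∫ p in r..(r+1), β₀ p t) ≤ ∫ p in r..(r+1), β₀ (r+1) t := by
      apply intervalIntegral.integral_mono_on (by linarith) (hβ₁int t _ _) intervalIntegrable_const
      intro p hp
      exact hβ₀mono t hp.2
    rw [intervalIntegral.integral_const] at h1
    simpa using h1
  have hβ₁mono : ∀ t, Monotone (fun r => β₁ r t) := by
    intro t a b hab
    simp only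
    have ea : β₁ a t = ∫ s in (0:ℝ)..1, β₀ (s + a) t := by
      have e : (∫ s in (0:ℝ)..1, β₀ (s + a) t) = ∫ s in (0+a)..(1+a), β₀ s t :=
        intervalIntegral.integral_comp_add_right (fun s => β₀ s t) a
      rw [e]
      have e2 : (0:ℝ)+a = a := by ring
      have e3 : (1:ℝ)+a = a+1 := by ring
      rw [e2, e3]
    have eb : β₁ b t = ∫ s in (0:ℝ)..1, β₀ (s + b) t := by
      have e : (∫ s in (0:ℝ)..1, β₀ (s + b) t) = ∫ s in (0+b)..(1+b), β₀ s t :=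
        intervalIntegral.integral_comp_add_right (fun s => β₀ s t) b
      rw [e]
      have e2 : (0:ℝ)+b = b := by ring
      have e3 : (1:ℝ)+b = b+1 := by ring
      rw [e2, e3]
    rw [ea, eb]
    apply intervalIntegral.integral_mono_on (by norm_num)
      (((hβ₀mono t).comp (fun x y hxy => by simpa using hxy : Monotone (fun s : ℝ => s + a))).monotoneOn _).intervalIntegrable
      (((hβ₀mono t).comp (fun x y hxy => by simpa using hxy : Monotone (fun s : ℝ => s + b))).monotoneOn _).intervalIntegrable
    intro s _
    show β₀ (s + a) t ≤ β₀ (s + b) t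
    exact hβ₀mono t (by linarith : s + a ≤ s + b)
  have hβ₁anti : ∀ r, Antitone (fun t => β₁ r t) := by
    intro r t₁ t₂ h
    apply intervalIntegral.integral_mono_on (by linarith) (hβ₁int t₂ _ _) (hβ₁int t₁ _ _)
    intro p _
    exact hβ₀anti p h
  have hβ₁cont : ∀ t, Continuous (fun r => β₁ r t) := by
    intro t
    have hG : Continuous fun y => ∫ p in (0:ℝ)..y, β₀ p t :=
      intervalIntegral.continuous_primitive (fun a b => hβ₁int t a b) 0
    have e : ∀ r : ℝ, β₁ r t = (∫ p in (0:ℝ)..(r+1), β₀ p t) - ∫ p in (0:ℝ)..r, β₀ p t := by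
      intro r
      have := intervalIntegral.integral_interval_sub_left (hβ₁int t 0 (r+1)) (hβ₁int t 0 r)
      exact this.symm
    have : Continuous fun r : ℝ => (∫ p in (0:ℝ)..(r+1), β₀ p t) - ∫ p in (0:ℝ)..r, β₀ p t :=
      (hG.comp (continuous_add_right 1)).sub hG
    exact this.congr (fun r => (e r).symm)
  have hβ₁tend : ∀ r, Tendsto (fun t => β₁ r t) atTop (nhds 0) := by
    intro r
    rw [Metric.tendsto_atTop]
    intro η hη
    obtain ⟨τ, hτ⟩ := hdecay (r+1) (η/2) (by linarith)
    refine ⟨τ + 1, fun t ht => ?_⟩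
    have h1 : β₁ r t ≤ ψ (r+1) (max (t-1) 0) :=
      le_trans (hβ₁ub r t) (hβ₀ub (r+1) t)
    have h2 : ψ (r+1) (max (t-1) 0) ≤ η/2 := hτ _ (le_max_of_le_left (by linarith))
    rw [Real.dist_eq, sub_zero, abs_of_nonneg (hβ₁nn r t)]
    linarith
  -- final KL function
  refine ⟨fun r t => min (κ r) (β₁ r t) + r * Real.exp (-t), ⟨?_, ?_⟩, ?_⟩
  · -- class K in r for each t ≥ 0
    intro t _
    refine ⟨?_, ?_, ?_⟩
    · exact ((hκc.inf (hβ₁cont t).continuousOn).add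
        ((continuous_mul_right (Real.exp (-t))).continuousOn))
    · intro a ha b hb hab
      have h1 : min (κ a) (β₁ a t) ≤ min (κ b) (β₁ b t) :=
        min_le_min (hκm ha hb hab.le) (hβ₁mono t hab.le)
      have h2 : a * Real.exp (-t) < b * Real.exp (-t) :=
        mul_lt_mul_of_pos_right hab (Real.exp_pos _)
      simp only
      linarith
    · simp only [hκ0, zero_mul, add_zero]
      exact min_eq_left (hβ₁nn 0 t)
  · -- antitone and decaying in t for each r ≥ 0
    intro r hr
    constructor
    · intro t₁ _ t₂ _ h
      have h1 : min (κ r) (β₁ r t₂) ≤ min (κ r) (β₁ r t₁) :=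
        min_le_min le_rfl (hβ₁anti r h)
      have h2 : r * Real.exp (-t₂) ≤ r * Real.exp (-t₁) :=
        mul_le_mul_of_nonneg_left (Real.exp_le_exp.mpr (by linarith)) hr
      simp only
      linarith
    · have hmin : Tendsto (fun t => min (κ r) (β₁ r t)) atTop (nhds 0) := by
        apply squeeze_zero (fun t => le_min (hκnn r hr) (hβ₁nn r t))
          (fun t => min_le_right _ _) (hβ₁tend r)
      have hexp : Tendsto (fun t => r * Real.exp (-t)) atTop (nhds 0) := by
        simpa using Real.tendsto_exp_neg_atTop_nhds_zero.const_mul r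
      simpa using hmin.add hexp
  · -- majorization
    intro r hr t ht
    have h1 : ψ r t ≤ min (κ r) (β₁ r t) :=
      le_min (hψκ r hr t) (le_trans (hβ₀lb r t ht) (hβ₁lb r t))
    have h2 : 0 ≤ r * Real.exp (-t) := mul_nonneg hr (Real.exp_pos _).le
    show ψ r t ≤ min (κ r) (β₁ r t) + r * Real.exp (-t)
    linarith

end AuxB
/-- Theorem 3.4 (ε-δ characterization of ISS): a forward complete system is ISS with respect
to an admissible functional if and only if it has the UBRS, UCEP and UUAG properties. -/
theorem ISS_iff_UBRS_UCEP_UUAG (S : Sys X Uv) (nrm : (ℝ → Uv) → ENNReal)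
    (hadm : IsAdmissible S nrm) :
    ISS S nrm ↔ (UBRS S nrm ∧ UCEP S nrm ∧ UUAG S nrm) := by
  constructor
  · -- forward direction
    rintro ⟨β, ρ, hβ, hρ, hest⟩
    have hβm : ∀ t, 0 ≤ t → MonotoneOn (fun r => β r t) (Ici 0) :=
      fun t ht => (hβ.1 t ht).mono
    have hβnn : ∀ r t, 0 ≤ r → 0 ≤ t → 0 ≤ β r t :=
      fun r t hr ht => (hβ.1 t ht).nonneg hr
    refine ⟨?_, ?_, ?_⟩
    · -- UBRS
      intro T hT r hr s hs
      refine ⟨β r 0 + ρ s, by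
        have h1 := hβnn r 0 hr.le le_rfl
        have h2 := hρ.1.nonneg hs.le
        linarith, ?_⟩
      intro t0 ht0 x0 hx0 u hu hnu t htt
      have hfin : nrm u < ⊤ := lt_of_le_of_lt hnu ENNReal.ofReal_lt_top
      have h1 := hest t0 ht0 x0 u hu hfin t htt.1
      have hts : 0 ≤ t - t0 := by linarith [htt.1]
      have h2 : β ‖x0‖ (t - t0) ≤ β r (t - t0) :=
        hβm (t - t0) hts (Set.mem_Ici.mpr (norm_nonneg _)) (Set.mem_Ici.mpr hr.le)
          (le_trans hx0 le_rfl)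
      have h3 : β r (t - t0) ≤ β r 0 :=
        (hβ.2 r hr.le).1 (Set.mem_Ici.mpr le_rfl) (Set.mem_Ici.mpr hts) hts
      have h4 : ρ (nrm u).toReal ≤ ρ s :=
        hρ.1.mono (Set.mem_Ici.mpr ENNReal.toReal_nonneg) (Set.mem_Ici.mpr hs.le)
          (ENNReal.toReal_le_of_le_ofReal hs.le hnu)
      linarith
    · -- UCEP
      intro h hh ε hε
      obtain ⟨δ₁, hδ₁, hs₁⟩ := (hβ.1 0 le_rfl).small (ε/2) (by linarith)
      obtain ⟨δ₂, hδ₂, hs₂⟩ := hρ.1.small (ε/2) (by linarith)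
      refine ⟨min δ₁ δ₂, lt_min hδ₁ hδ₂, ?_⟩
      intro t0 ht0 x0 hx0 u hu hnu t htt
      have hfin : nrm u < ⊤ := lt_of_le_of_lt hnu ENNReal.ofReal_lt_top
      have h1 := hest t0 ht0 x0 u hu hfin t htt.1
      have hts : 0 ≤ t - t0 := by linarith [htt.1]
      have h2 : β ‖x0‖ (t - t0) ≤ β ‖x0‖ 0 :=
        (hβ.2 ‖x0‖ (norm_nonneg _)).1 (Set.mem_Ici.mpr le_rfl) (Set.mem_Ici.mpr hts) hts
      have h3 : β ‖x0‖ 0 ≤ ε/2 :=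
        hs₁ ‖x0‖ (norm_nonneg _) (le_trans hx0 (min_le_left _ _))
      have h4 : ρ (nrm u).toReal ≤ ε/2 := by
        apply hs₂ _ ENNReal.toReal_nonneg
        exact le_trans (ENNReal.toReal_le_of_le_ofReal (le_of_lt (lt_min hδ₁ hδ₂)) hnu)
          (min_le_right _ _)
      linarith
    · -- UUAG
      refine ⟨ρ, hρ.1, ?_⟩
      intro r ε hε hεr
      have hr0 : (0:ℝ) ≤ r := le_trans hε.le hεr
      obtain ⟨N, hN⟩ := Metric.tendsto_atTop.mp (hβ.2 r hr0).2 ε hε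
      refine ⟨max N 1, lt_of_lt_of_le one_pos (le_max_right _ _), ?_⟩
      intro t0 ht0 x0 hx0 u hu hfin t htt
      have hts : 0 ≤ t - t0 := by
        have := le_max_right N 1
        linarith [le_trans (le_max_right N (1:ℝ)) (by linarith : max N 1 ≤ t - t0)]
      have h1 := hest t0 ht0 x0 u hu hfin t (by linarith [lt_of_lt_of_le one_pos (le_max_right N 1)])
      have h2 : β ‖x0‖ (t - t0) ≤ β r (t - t0) :=
        hβm (t - t0) hts (Set.mem_Ici.mpr (norm_nonneg _)) (Set.mem_Ici.mpr hr0) hx0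
      have h3 : β r (t - t0) < ε := by
        have := hN (t - t0) (le_trans (le_max_left N 1) (by linarith))
        rw [Real.dist_eq, sub_zero] at this
        calc β r (t - t0) ≤ |β r (t - t0)| := le_abs_self _
        _ < ε := this
      linarith
  · -- reverse direction
    rintro ⟨hUB, hUC, hUA⟩
    obtain ⟨ν, hνK, hAG⟩ := hUA
    -- global boundedness of trajectories
    have hbd : ∀ r > (0:ℝ), ∀ s > (0:ℝ), ∃ C, 0 ≤ C ∧ ∀ t0 ≥ (0:ℝ), ∀ x0 : X, ‖x0‖ ≤ r →
        ∀ u ∈ S.U, nrm u ≤ ENNReal.ofReal s → ∀ t ≥ t0, ‖S.phi t t0 x0 u‖ ≤ C := by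
      intro r hr s hs
      obtain ⟨T, hT, hTag⟩ := hAG r r hr le_rfl
      obtain ⟨C, hC0, hC⟩ := hUB T hT r hr s hs
      refine ⟨max C (r + ν s), le_trans hC0 (le_max_left _ _), ?_⟩
      intro t0 ht0 x0 hx0 u hu hnu t ht
      rcases le_or_gt t (t0 + T) with hcase | hcase
      · exact le_trans (hC t0 ht0 x0 hx0 u hu hnu t ⟨ht, hcase⟩) (le_max_left _ _)
      · have h1 := hTag t0 ht0 x0 hx0 u hu (lt_of_le_of_lt hnu ENNReal.ofReal_lt_top) t hcase.le
        have h2 : ν (nrm u).toReal ≤ ν s := hνK.mono (Set.mem_Ici.mpr ENNReal.toReal_nonneg)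
          (Set.mem_Ici.mpr hs.le) (ENNReal.toReal_le_of_le_ofReal hs.le hnu)
        exact le_trans h1 (le_trans (by linarith) (le_max_right _ _))
    -- local estimate near the equilibrium
    have hloc : ∀ ε > (0:ℝ), ∃ δ > (0:ℝ), ∀ t0 ≥ (0:ℝ), ∀ x0 : X, ‖x0‖ ≤ δ →
        ∀ u ∈ S.U, nrm u ≤ ENNReal.ofReal δ → ∀ t ≥ t0,
          ‖S.phi t t0 x0 u‖ ≤ ε + ν (nrm u).toReal := by
      intro ε hε
      obtain ⟨T, hT, hTag⟩ := hAG 1 (min ε 1) (lt_min hε one_pos) (min_le_right _ _)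
      obtain ⟨δ₀, hδ₀, hC⟩ := hUC T hT (min ε 1) (lt_min hε one_pos)
      refine ⟨min δ₀ 1, lt_min hδ₀ one_pos, ?_⟩
      intro t0 ht0 x0 hx0 u hu hnu t ht
      have hν0 : 0 ≤ ν (nrm u).toReal := hνK.nonneg ENNReal.toReal_nonneg
      rcases le_or_gt t (t0 + T) with hcase | hcase
      · have h1 : ‖S.phi t t0 x0 u‖ ≤ min ε 1 := hC t0 ht0 x0
          (le_trans hx0 (min_le_left _ _)) u hu
          (le_trans hnu (ENNReal.ofReal_le_ofReal (min_le_left _ _))) t ⟨ht, hcase⟩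
        linarith [min_le_left ε 1]
      · have h1 := hTag t0 ht0 x0 (le_trans hx0 (min_le_right _ _)) u hu
          (lt_of_le_of_lt hnu ENNReal.ofReal_lt_top) t hcase.le
        linarith [min_le_left ε 1]
    -- the reachability-sup function w and its class-K majorant κ
    set Aw : ℝ → Set ℝ := fun c =>
      {y | ∃ t0 : ℝ, ∃ x0 : X, ∃ u : ℝ → Uv, ∃ t : ℝ, 0 ≤ t0 ∧ ‖x0‖ ≤ c ∧ u ∈ S.U ∧
        nrm u ≤ ENNReal.ofReal c ∧ t0 ≤ t ∧ y = ‖S.phi t t0 x0 u‖} with hAwdef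
    have hAwzero : ∀ c, 0 ≤ c → (0:ℝ) ∈ Aw c := by
      intro c hc
      refine ⟨0, 0, (fun _ => 0), 0, le_rfl, by simpa using hc, S.zero_mem, ?_, le_rfl, ?_⟩
      · rw [hadm.zero]; exact zero_le
      · rw [S.identity 0 le_rfl 0 _ S.zero_mem, norm_zero]
    have hAwempty : ∀ c, c < 0 → Aw c = ∅ := by
      intro c hc
      ext y
      simp only [Set.mem_setOf_eq, Set.mem_empty_iff_false, iff_false]
      rintro ⟨t0, x0, u, t, _, hx0, _⟩
      linarith [norm_nonneg x0]
    have hAwsub : ∀ c₁ c₂, c₁ ≤ c₂ → Aw c₁ ⊆ Aw c₂ := by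
      intro c₁ c₂ h y
      rintro ⟨t0, x0, u, t, h1, h2, h3, h4, h5, h6⟩
      exact ⟨t0, x0, u, t, h1, h2.trans h, h3, h4.trans (ENNReal.ofReal_le_ofReal h), h5, h6⟩
    have hAwbdd : ∀ c, BddAbove (Aw c) := by
      intro c
      rcases lt_or_ge c 0 with hc | hc
      · rw [hAwempty c hc]; exact bddAbove_empty
      · obtain ⟨C, hC0, hC⟩ := hbd (c+1) (by linarith) (c+1) (by linarith)
        refine ⟨C, ?_⟩
        rintro y ⟨t0, x0, u, t, h1, h2, h3, h4, h5, h6⟩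
        rw [h6]
        exact hC t0 h1 x0 (by linarith) u h3
          (h4.trans (ENNReal.ofReal_le_ofReal (by linarith))) t h5
    set w : ℝ → ℝ := fun c => sSup (Aw c) with hwdef
    have hwnn : ∀ c, 0 ≤ c → 0 ≤ w c := fun c hc => le_csSup (hAwbdd c) (hAwzero c hc)
    have hwmono : Monotone w := by
      intro c₁ c₂ h
      rcases lt_or_ge c₁ 0 with hc | hc
      · show w c₁ ≤ w c₂
        have e : w c₁ = 0 := by rw [hwdef]; simp [hAwempty c₁ hc, Real.sSup_empty]
        rw [e]
        rcases lt_or_ge c₂ 0 with hc2 | hc2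
        · have e2 : w c₂ = 0 := by rw [hwdef]; simp [hAwempty c₂ hc2, Real.sSup_empty]
          rw [e2]
        · exact hwnn c₂ hc2
      · exact csSup_le_csSup (hAwbdd c₂) ⟨0, hAwzero c₁ hc⟩ (hAwsub c₁ c₂ h)
    have hwub : ∀ ε > (0:ℝ), ∃ δ > (0:ℝ), ∀ c, 0 ≤ c → c ≤ δ →
        w c ≤ ε + ν (min c δ) := by
      intro ε hε
      obtain ⟨δ, hδ, hl⟩ := hloc ε hε
      refine ⟨δ, hδ, ?_⟩
      intro c hc hcδ
      apply csSup_le ⟨0, hAwzero c hc⟩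
      rintro y ⟨t0, x0, u, t, h1, h2, h3, h4, h5, h6⟩
      have h7 := hl t0 h1 x0 (h2.trans hcδ) u h3
        (h4.trans (ENNReal.ofReal_le_ofReal hcδ)) t h5
      have h8 : (nrm u).toReal ≤ min c δ := by
        apply le_min
        · exact ENNReal.toReal_le_of_le_ofReal hc h4
        · exact ENNReal.toReal_le_of_le_ofReal hδ.le (h4.trans (ENNReal.ofReal_le_ofReal hcδ))
      have h9 : ν (nrm u).toReal ≤ ν (min c δ) :=
        hνK.mono (Set.mem_Ici.mpr ENNReal.toReal_nonneg)
          (Set.mem_Ici.mpr (le_min hc hδ.le)) h8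
      rw [h6]; linarith
    have hw0 : w 0 = 0 := by
      have hle : ∀ ε > (0:ℝ), w 0 ≤ ε := by
        intro ε hε
        obtain ⟨δ, hδ, h⟩ := hwub ε hε
        have := h 0 le_rfl hδ.le
        simpa [hνK.2.2, min_eq_left hδ.le] using this
      by_contra hne
      have hpos : 0 < w 0 := lt_of_le_of_ne (hwnn 0 le_rfl) (Ne.symm hne)
      linarith [hle (w 0 / 2) (by linarith)]
    have hwsmall : ∀ ε > (0:ℝ), ∃ δ > (0:ℝ), ∀ c, c ≤ δ → w c ≤ ε := by
      intro ε hε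
      obtain ⟨δ₁, hδ₁, h₁⟩ := hwub (ε/2) (by linarith)
      obtain ⟨δ₂, hδ₂, h₂⟩ := hνK.small (ε/2) (by linarith)
      refine ⟨min δ₁ δ₂, lt_min hδ₁ hδ₂, ?_⟩
      intro c hc
      rcases lt_or_ge c 0 with hcn | hcn
      · have e : w c = 0 := by rw [hwdef]; simp [hAwempty c hcn, Real.sSup_empty]
        rw [e]; linarith
      · have h3 := h₁ c hcn (hc.trans (min_le_left _ _))
        have h4 : ν (min c δ₁) ≤ ε/2 := by
          apply h₂ _ (le_min hcn hδ₁.le)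
          exact le_trans (min_le_left _ _) (hc.trans (min_le_right _ _))
        linarith
    obtain ⟨κ, hκc, hκs, hκ0, hκm, hκmaj, hκnn⟩ := exists_K_majorant w hwmono hw0 hwsmall
    -- uniform global stability
    have hUGS : ∀ t0 ≥ (0:ℝ), ∀ x0 : X, ∀ u ∈ S.U, nrm u < ⊤ → ∀ t ≥ t0,
        ‖S.phi t t0 x0 u‖ ≤ κ ‖x0‖ + κ (nrm u).toReal := by
      intro t0 ht0 x0 u hu hfin t ht
      set c := max ‖x0‖ (nrm u).toReal with hcdef
      have hc0 : 0 ≤ c := le_trans (norm_nonneg _) (le_max_left _ _)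
      have hmem : ‖S.phi t t0 x0 u‖ ∈ Aw c := by
        refine ⟨t0, x0, u, t, ht0, le_max_left _ _, hu, ?_, ht, rfl⟩
        rw [← ENNReal.ofReal_toReal hfin.ne]
        exact ENNReal.ofReal_le_ofReal (le_max_right _ _)
      have h1 : ‖S.phi t t0 x0 u‖ ≤ w c := le_csSup (hAwbdd c) hmem
      have h2 : w c ≤ κ c := hκmaj c hc0
      have h3 : κ c ≤ κ ‖x0‖ + κ (nrm u).toReal := by
        rcases max_cases ‖x0‖ (nrm u).toReal with ⟨he, _⟩ | ⟨he, _⟩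
        · rw [hcdef, he]; linarith [hκnn (nrm u).toReal ENNReal.toReal_nonneg]
        · rw [hcdef, he]; linarith [hκnn ‖x0‖ (norm_nonneg _)]
      linarith
    -- the gain ρ
    set ρ : ℝ → ℝ := fun x => x + ν x + κ x with hρdef
    have hρnn : ∀ x, 0 ≤ x → 0 ≤ ρ x := by
      intro x hx
      have := hνK.nonneg hx
      have := hκnn x hx
      show 0 ≤ x + ν x + κ x
      linarith
    have hρν : ∀ x, 0 ≤ x → ν x ≤ ρ x := by
      intro x hx
      have := hκnn x hx
      show ν x ≤ x + ν x + κ x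
      linarith
    have hρκ : ∀ x, 0 ≤ x → κ x ≤ ρ x := by
      intro x hx
      have := hνK.nonneg hx
      show κ x ≤ x + ν x + κ x
      linarith
    have hρK : ClassKInf ρ := by
      refine ⟨⟨?_, ?_, ?_⟩, ?_⟩
      · exact (continuous_id.continuousOn.add hνK.1).add hκc
      · intro a ha b hb hab
        have h1 := hνK.mono ha hb hab.le
        have h2 := hκm ha hb hab.le
        show a + ν a + κ a < b + ν b + κ b
        linarith
      · show (0:ℝ) + ν 0 + κ 0 = 0
        rw [hνK.2.2, hκ0]; ring
      · apply tendsto_atTop_mono' atTop ?_ tendsto_id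
        filter_upwards [eventually_ge_atTop (0:ℝ)] with x hx
        have := hνK.nonneg hx
        have := hκnn x hx
        show id x ≤ x + ν x + κ x
        simp only [id_eq]
        linarith
    -- the decreasing envelope ψ
    set A : ℝ → ℝ → Set ℝ := fun r τ =>
      {y | ∃ t0 : ℝ, ∃ x0 : X, ∃ u : ℝ → Uv, ∃ t : ℝ, 0 ≤ t0 ∧ t0 ≤ t ∧
        t0 + max τ 0 ≤ t ∧ ‖x0‖ ≤ r ∧ u ∈ S.U ∧ nrm u < ⊤ ∧
        y = max (‖S.phi t t0 x0 u‖ - ρ ((nrm u).toReal)) 0} with hAdef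
    have hAne : ∀ r τ, 0 ≤ r → (A r τ).Nonempty := by
      intro r τ hr
      refine ⟨_, 0, 0, (fun _ => 0), max τ 0, le_rfl, le_max_right _ _, by simp, by simpa using hr,
        S.zero_mem, by rw [hadm.zero]; exact ENNReal.zero_lt_top, rfl⟩
    have hAempty : ∀ r τ, r < 0 → A r τ = ∅ := by
      intro r τ hr
      ext y
      simp only [Set.mem_setOf_eq, Set.mem_empty_iff_false, iff_false]
      rintro ⟨t0, x0, u, t, _, _, _, hx0, _⟩
      linarith [norm_nonneg x0]
    have hAbdd : ∀ r τ, BddAbove (A r τ) := by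
      intro r τ
      refine ⟨max (κ r) 0, ?_⟩
      rintro y ⟨t0, x0, u, t, h1, h2, h3, h4, h5, h6, h7⟩
      have hr0 : 0 ≤ r := le_trans (norm_nonneg x0) h4
      have hg := hUGS t0 h1 x0 u h5 h6 t h2
      have hκx : κ ‖x0‖ ≤ κ r := hκm (Set.mem_Ici.mpr (norm_nonneg _)) (Set.mem_Ici.mpr hr0) h4
      have hκρ : κ (nrm u).toReal ≤ ρ (nrm u).toReal := hρκ _ ENNReal.toReal_nonneg
      rw [h7]
      apply max_le _ (le_max_right _ _)
      apply le_trans _ (le_max_left _ _)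
      linarith
    set ψ : ℝ → ℝ → ℝ := fun r τ => sSup (A r τ) with hψdef
    have hψnn : ∀ r τ, 0 ≤ ψ r τ := by
      intro r τ
      rcases lt_or_ge r 0 with hr | hr
      · show 0 ≤ sSup (A r τ)
        rw [hAempty r τ hr, Real.sSup_empty]
      · obtain ⟨y, hy⟩ := hAne r τ hr
        have hy0 : 0 ≤ y := by
          obtain ⟨t0, x0, u, t, _, _, _, _, _, _, h7⟩ := hy
          rw [h7]; exact le_max_right _ _
        exact le_trans hy0 (le_csSup (hAbdd r τ) hy)
    have hψκ : ∀ r, 0 ≤ r → ∀ τ, ψ r τ ≤ κ r := by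
      intro r hr τ
      apply csSup_le (hAne r τ hr)
      rintro y hy
      have := hAbdd r τ
      have h1 : y ≤ max (κ r) 0 := by
        obtain ⟨t0, x0, u, t, h1, h2, h3, h4, h5, h6, h7⟩ := hy
        have hg := hUGS t0 h1 x0 u h5 h6 t h2
        have hκx : κ ‖x0‖ ≤ κ r := hκm (Set.mem_Ici.mpr (norm_nonneg _)) (Set.mem_Ici.mpr hr) h4
        have hκρ : κ (nrm u).toReal ≤ ρ (nrm u).toReal := hρκ _ ENNReal.toReal_nonneg
        rw [h7]
        apply max_le _ (le_max_right _ _)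
        apply le_trans _ (le_max_left _ _)
        linarith
      rwa [max_eq_left (hκnn r hr)] at h1
    have hψm : ∀ τ, Monotone (fun r => ψ r τ) := by
      intro τ a b hab
      rcases lt_or_ge a 0 with ha | ha
      · show sSup (A a τ) ≤ sSup (A b τ)
        rw [hAempty a τ ha, Real.sSup_empty]
        exact hψnn b τ
      · apply csSup_le_csSup (hAbdd b τ) (hAne a τ ha)
        rintro y ⟨t0, x0, u, t, h1, h2, h3, h4, h5, h6, h7⟩
        exact ⟨t0, x0, u, t, h1, h2, h3, h4.trans hab, h5, h6, h7⟩
    have hψa : ∀ r, Antitone (fun τ => ψ r τ) := by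
      intro r τ₁ τ₂ h
      rcases lt_or_ge r 0 with hr | hr
      · show sSup (A r τ₂) ≤ sSup (A r τ₁)
        rw [hAempty r τ₂ hr, Real.sSup_empty]
        exact hψnn r τ₁
      · apply csSup_le_csSup (hAbdd r τ₁) (hAne r τ₂ hr)
        rintro y ⟨t0, x0, u, t, h1, h2, h3, h4, h5, h6, h7⟩
        exact ⟨t0, x0, u, t, h1, h2, le_trans (by have hmm : max τ₁ 0 ≤ max τ₂ 0 := max_le_max h (le_refl (0:ℝ)); linarith) h3, h4, h5, h6, h7⟩
    have hdecay : ∀ r, ∀ η > (0:ℝ), ∃ τ, ∀ t ≥ τ, ψ r t ≤ η := by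
      intro r η hη
      rcases lt_or_ge r 0 with hr | hr
      · refine ⟨0, fun t _ => ?_⟩
        show sSup (A r t) ≤ η
        rw [hAempty r t hr, Real.sSup_empty]
        linarith
      · rcases eq_or_lt_of_le hr with hr0 | hr0
        · refine ⟨0, fun t _ => ?_⟩
          have := hψκ r hr t
          rw [← hr0] at this ⊢
          rw [hκ0] at this
          linarith
        · obtain ⟨T, hT, hTag⟩ := hAG r (min η r) (lt_min hη hr0) (min_le_right _ _)
          refine ⟨T, fun τ hτ => ?_⟩
          apply csSup_le (hAne r τ hr)
          rintro y ⟨t0, x0, u, t, h1, h2, h3, h4, h5, h6, h7⟩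
          have htT : t ≥ t0 + T := by
            have : T ≤ max τ 0 := le_trans hτ (le_max_left _ _)
            linarith
          have hg := hTag t0 h1 x0 h4 u h5 h6 t htT
          have hνρ : ν (nrm u).toReal ≤ ρ (nrm u).toReal := hρν _ ENNReal.toReal_nonneg
          rw [h7]
          apply max_le _ hη.le
          have := min_le_left η r
          linarith
    obtain ⟨β, hβKL, hβmaj⟩ := exists_KL_majorant ψ κ hκc hκm hκ0 hκnn hψnn hψκ hψm hψa hdecay
    refine ⟨β, ρ, hβKL, hρK, ?_⟩
    intro t0 ht0 x0 u hu hfin t ht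
    have hts : 0 ≤ t - t0 := by linarith
    have hmem : max (‖S.phi t t0 x0 u‖ - ρ ((nrm u).toReal)) 0 ∈ A ‖x0‖ (t - t0) := by
      refine ⟨t0, x0, u, t, ht0, ht, ?_, le_refl _, hu, hfin, rfl⟩
      rw [max_eq_left hts]
      linarith
    have h1 : max (‖S.phi t t0 x0 u‖ - ρ ((nrm u).toReal)) 0 ≤ ψ ‖x0‖ (t - t0) :=
      le_csSup (hAbdd _ _) hmem
    have h2 : ψ ‖x0‖ (t - t0) ≤ β ‖x0‖ (t - t0) :=
      hβmaj ‖x0‖ (norm_nonneg _) (t - t0) hts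
    have h3 : ‖S.phi t t0 x0 u‖ - ρ ((nrm u).toReal) ≤ max (‖S.phi t t0 x0 u‖ - ρ ((nrm u).toReal)) 0 :=
      le_max_left _ _
    linarith
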